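/- Let C be a category with finite products and terminal object ⋆, let D be an object of C and ζ : ⋆ → D any morphism. Then the square with corners D³, D⁴, D, D², with top map ⟨π₁, π₂, ζ∘!, π₃⟩ : D³ → D⁴, left map π₃ : D³ → D, right map ⟨π₃, π₄⟩ : D⁴ → D², and bottom map ⟨ζ∘!, id⟩ : D → D² (where ! denotes the unique map to the terminal object and πᵢ the product projections), is a pullback square in C. -/

import Mathlib

open CategoryTheory CategoryTheory.Limits

/-- Let `C` be a category with finite products, `D` an object and `ζ : ⋆ → D` any morphism
from the terminal object. Then the square with corners `D³`, `D⁴`, `D`, `D²`, with top map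
`⟨π₁, π₂, ζ∘!, π₃⟩ : D³ → D⁴`, left map `π₃ : D³ → D`, right map `⟨π₃, π₄⟩ : D⁴ → D²` and
bottom map `⟨ζ∘!, id⟩ : D → D²`, is a pullback square in `C`. -/
theorem pullback_of_pointed_power_square {C : Type*} [Category C] [HasFiniteProducts C]
    (D : C) (ζ : ⊤_ C ⟶ D) :
    IsPullback
      (prod.lift prod.fst
        (prod.lift (prod.snd ≫ prod.fst)
          (prod.lift (terminal.from (D ⨯ (D ⨯ D)) ≫ ζ) (prod.snd ≫ prod.snd))) :
        D ⨯ (D ⨯ D) ⟶ D ⨯ (D ⨯ (D ⨯ D)))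
      (prod.snd ≫ prod.snd : D ⨯ (D ⨯ D) ⟶ D)
      (prod.lift (prod.snd ≫ prod.snd ≫ prod.fst) (prod.snd ≫ prod.snd ≫ prod.snd) :
        D ⨯ (D ⨯ (D ⨯ D)) ⟶ D ⨯ D)
      (prod.lift (terminal.from D ≫ ζ) (𝟙 D) : D ⟶ D ⨯ D) := by
  refine IsPullback.of_isLimit' ⟨?_⟩ ?_
  · ext <;> simp [Category.assoc, prod.lift_fst, prod.lift_snd, prod.lift_fst_assoc, prod.lift_snd_assoc]
  · refine PullbackCone.IsLimit.mk _
      (fun s => prod.lift (s.fst ≫ prod.fst)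
        (prod.lift (s.fst ≫ prod.snd ≫ prod.fst) s.snd)) (fun s => ?_) (fun s => by simp [Category.assoc, prod.lift_fst, prod.lift_snd, prod.lift_fst_assoc, prod.lift_snd_assoc])
      (fun s m h₁ h₂ => ?_)
    · have hc := s.condition
      have h3 : s.fst ≫ prod.snd ≫ prod.snd ≫ prod.fst = terminal.from s.pt ≫ ζ := by
        have := congrArg (fun t => t ≫ prod.fst) hc
        simpa [Category.assoc, ← Category.assoc, Subsingleton.elim
          (s.snd ≫ terminal.from D) (terminal.from s.pt), prod.lift_fst, prod.lift_snd, prod.lift_fst_assoc, prod.lift_snd_assoc] using this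
      have h4 : s.fst ≫ prod.snd ≫ prod.snd ≫ prod.snd = s.snd := by
        have := congrArg (fun t => t ≫ prod.snd) hc
        simpa [Category.assoc, prod.lift_fst, prod.lift_snd, prod.lift_fst_assoc, prod.lift_snd_assoc] using this
      ext <;> simp [Category.assoc, h3, h4, prod.lift_fst, prod.lift_snd, prod.lift_fst_assoc, prod.lift_snd_assoc]
    · have e1 := congrArg (fun t => t ≫ prod.fst) h₁
      have e2 := congrArg (fun t => t ≫ prod.snd ≫ prod.fst) h₁
      simp [Category.assoc, prod.lift_fst, prod.lift_snd, prod.lift_fst_assoc, prod.lift_snd_assoc] at e1 e2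
      exact Limits.prod.hom_ext (by simpa [prod.lift_fst, prod.lift_snd, prod.lift_fst_assoc, prod.lift_snd_assoc] using e1)
        (Limits.prod.hom_ext (by simpa [prod.lift_fst, prod.lift_snd, prod.lift_fst_assoc, prod.lift_snd_assoc] using e2) (by simpa [prod.lift_fst, prod.lift_snd, prod.lift_fst_assoc, prod.lift_snd_assoc] using h₂))
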